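/- For the Cefalú quartic with λ = 1, every point of ℙ³ of the form [±1:±1:±1:0] together with all coordinate permutations (i.e., points with exactly one coordinate zero and the other three equal to ±1) is a singular point of {p_1 = 0}, and there are exactly 16 such points in ℙ³. -/

import Mathlib

open scoped BigOperators

/-- The Cefalú family of quartic polynomials. -/
noncomputable def cefalu (lam : ℂ) (z : Fin 4 → ℂ) : ℂ :=
  (∑ i, z i ^ 4) - (lam / 3) * (∑ i, z i ^ 2) ^ 2

/-- Partial derivative of `cefalu lam` in the `i`-th coordinate. -/
noncomputable def cefaluPartial (lam : ℂ) (z : Fin 4 → ℂ) (i : Fin 4) : ℂ :=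
  deriv (fun t => cefalu lam (Function.update z i t)) (z i)

/-- Points with exactly one coordinate zero and the other three equal to `±1`. -/
def threeSignPoints : Set (Fin 4 → ℂ) :=
  {z | ∃ i : Fin 4, z i = 0 ∧ ∀ k, k ≠ i → (z k = 1 ∨ z k = -1)}

/-! ### Auxiliary material -/

open scoped Classical

noncomputable def sgn (b : Bool) : ℂ := if b then 1 else -1

lemma sgn_pm (b : Bool) : sgn b = 1 ∨ sgn b = -1 := by cases b <;> simp [sgn]

lemma sgn_inj : Function.Injective sgn := by
  intro b b' h
  cases b <;> cases b' <;> first | rfl | (exfalso; norm_num [sgn] at h)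

lemma sgn_of_pm {x : ℂ} (h : x = 1 ∨ x = -1) :
    sgn (decide (x = 1)) = x := by
  rcases h with h | h <;> subst h
  · simp [sgn]
  · rw [decide_eq_false (by norm_num)]; simp [sgn]

lemma pm_mul {x y : ℂ} (hx : x = 1 ∨ x = -1) (hy : y = 1 ∨ y = -1) :
    x * y = 1 ∨ x * y = -1 := by
  rcases hx with h | h <;> rcases hy with h' | h' <;> subst h <;> subst h' <;> norm_num

lemma pm_sq {x : ℂ} (hx : x = 1 ∨ x = -1) : x * x = 1 := by
  rcases hx with h | h <;> subst h <;> norm_num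

noncomputable def repv (i : Fin 4) (b c : Bool) : Fin 4 → ℂ :=
  if i = 0 then ![0, 1, sgn b, sgn c]
  else if i = 1 then ![1, 0, sgn b, sgn c]
  else if i = 2 then ![1, sgn b, 0, sgn c]
  else ![1, sgn b, sgn c, 0]

lemma repv_zero (i : Fin 4) (b c : Bool) : repv i b c i = 0 := by
  fin_cases i <;> simp [repv]

lemma repv_pm (i : Fin 4) (b c : Bool) :
    ∀ k, k ≠ i → (repv i b c k = 1 ∨ repv i b c k = -1) := by
  intro k hk
  fin_cases i <;> fin_cases k <;>
    simp_all [repv] <;> first | exact sgn_pm b | exact sgn_pm c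

lemma repv_mem (i : Fin 4) (b c : Bool) : repv i b c ∈ threeSignPoints :=
  ⟨i, repv_zero i b c, repv_pm i b c⟩

lemma repv_ne_zero (i : Fin 4) (b c : Bool) : repv i b c ≠ 0 := by
  intro h
  have h0 := congrFun h 0
  have h1 := congrFun h 1
  fin_cases i <;> simp [repv] at h0 h1

def pivot (i : Fin 4) : Fin 4 := if i = 0 then 1 else 0

lemma repv_pivot (i : Fin 4) (b c : Bool) : repv i b c (pivot i) = 1 := by
  fin_cases i <;> simp [repv, pivot]

/-- The 16 projective points. -/
noncomputable def repPoint (p : Fin 4 × Bool × Bool) :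
    Projectivization ℂ (Fin 4 → ℂ) :=
  Projectivization.mk ℂ (repv p.1 p.2.1 p.2.2) (repv_ne_zero _ _ _)

lemma repPoint_inj : Function.Injective repPoint := by
  rintro ⟨i, b, c⟩ ⟨i', b', c'⟩ h
  rw [repPoint, repPoint, Projectivization.mk_eq_mk_iff] at h
  obtain ⟨a, ha⟩ := h
  have hii : i = i' := by
    by_contra hne
    have h1 := congrFun ha i
    rw [Pi.smul_apply, repv_zero, Units.smul_def, smul_eq_mul] at h1
    rcases repv_pm i' b' c' i (fun e => hne e) with hp | hp <;> rw [hp] at h1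
    · exact a.ne_zero (by simpa using h1)
    · exact a.ne_zero (by simpa using h1)
  subst hii
  have ha1 : (a : ℂ) = 1 := by
    have h1 := congrFun ha (pivot i)
    rwa [Pi.smul_apply, repv_pivot, repv_pivot, Units.smul_def, smul_eq_mul,
      mul_one] at h1
  have hw : repv i b' c' = repv i b c := by
    funext m
    have hm := congrFun ha m
    rwa [Pi.smul_apply, Units.smul_def, smul_eq_mul, ha1, one_mul] at hm
  fin_cases i
  · have hb := congrFun hw 2
    have hc := congrFun hw 3
    simp [repv] at hb hc
    exact Prod.ext rfl (Prod.ext (sgn_inj hb.symm) (sgn_inj hc.symm))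
  · have hb := congrFun hw 2
    have hc := congrFun hw 3
    simp [repv] at hb hc
    exact Prod.ext rfl (Prod.ext (sgn_inj hb.symm) (sgn_inj hc.symm))
  · have hb := congrFun hw 1
    have hc := congrFun hw 3
    simp [repv] at hb hc
    exact Prod.ext rfl (Prod.ext (sgn_inj hb.symm) (sgn_inj hc.symm))
  · have hb := congrFun hw 1
    have hc := congrFun hw 2
    simp [repv] at hb hc
    exact Prod.ext rfl (Prod.ext (sgn_inj hb.symm) (sgn_inj hc.symm))

lemma cefaluPartial_eq (lam : ℂ) (z : Fin 4 → ℂ) (i : Fin 4) :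
    cefaluPartial lam z i =
      4 * z i ^ 3 - lam / 3 * (2 * (∑ k, z k ^ 2) * (2 * z i)) := by
  have key : ∀ (A B c : ℂ),
      HasDerivAt (fun t : ℂ => (t ^ 4 + A) - lam / 3 * ((t ^ 2 + B) ^ 2))
        (4 * c ^ 3 - lam / 3 * (2 * (c ^ 2 + B) * (2 * c))) c := by
    intro A B c
    have h4 : HasDerivAt (fun t : ℂ => t ^ 4 + A) (4 * c ^ 3) c := by
      simpa using (hasDerivAt_pow 4 c).add_const A
    have h2 : HasDerivAt (fun t : ℂ => t ^ 2 + B) (2 * c) c := by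
      simpa using (hasDerivAt_pow 2 c).add_const B
    have h2sq : HasDerivAt (fun t : ℂ => (t ^ 2 + B) ^ 2)
        (2 * (c ^ 2 + B) * (2 * c)) c := by
      have := h2.pow 2
      norm_num at this
      exact this
    exact h4.sub (h2sq.const_mul _)
  fin_cases i
  · show cefaluPartial lam z 0 = 4 * z 0 ^ 3 - lam / 3 * (2 * (∑ k, z k ^ 2) * (2 * z 0))
    have he : (fun t => cefalu lam (Function.update z 0 t)) =
        fun t : ℂ => (t ^ 4 + (z 1 ^ 4 + z 2 ^ 4 + z 3 ^ 4)) -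
          lam / 3 * ((t ^ 2 + (z 1 ^ 2 + z 2 ^ 2 + z 3 ^ 2)) ^ 2) := by
      funext t
      simp [cefalu, Fin.sum_univ_four, Function.update_apply]
      ring
    show deriv (fun t => cefalu lam (Function.update z 0 t)) (z 0) = _
    rw [he, (key _ _ _).deriv, Fin.sum_univ_four]
    ring
  · show cefaluPartial lam z 1 = 4 * z 1 ^ 3 - lam / 3 * (2 * (∑ k, z k ^ 2) * (2 * z 1))
    have he : (fun t => cefalu lam (Function.update z 1 t)) =
        fun t : ℂ => (t ^ 4 + (z 0 ^ 4 + z 2 ^ 4 + z 3 ^ 4)) -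
          lam / 3 * ((t ^ 2 + (z 0 ^ 2 + z 2 ^ 2 + z 3 ^ 2)) ^ 2) := by
      funext t
      simp [cefalu, Fin.sum_univ_four, Function.update_apply]
      ring
    show deriv (fun t => cefalu lam (Function.update z 1 t)) (z 1) = _
    rw [he, (key _ _ _).deriv, Fin.sum_univ_four]
    ring
  · show cefaluPartial lam z 2 = 4 * z 2 ^ 3 - lam / 3 * (2 * (∑ k, z k ^ 2) * (2 * z 2))
    have he : (fun t => cefalu lam (Function.update z 2 t)) =
        fun t : ℂ => (t ^ 4 + (z 0 ^ 4 + z 1 ^ 4 + z 3 ^ 4)) -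
          lam / 3 * ((t ^ 2 + (z 0 ^ 2 + z 1 ^ 2 + z 3 ^ 2)) ^ 2) := by
      funext t
      simp [cefalu, Fin.sum_univ_four, Function.update_apply]
      ring
    show deriv (fun t => cefalu lam (Function.update z 2 t)) (z 2) = _
    rw [he, (key _ _ _).deriv, Fin.sum_univ_four]
    ring
  · show cefaluPartial lam z 3 = 4 * z 3 ^ 3 - lam / 3 * (2 * (∑ k, z k ^ 2) * (2 * z 3))
    have he : (fun t => cefalu lam (Function.update z 3 t)) =
        fun t : ℂ => (t ^ 4 + (z 0 ^ 4 + z 1 ^ 4 + z 2 ^ 4)) -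
          lam / 3 * ((t ^ 2 + (z 0 ^ 2 + z 1 ^ 2 + z 2 ^ 2)) ^ 2) := by
      funext t
      simp [cefalu, Fin.sum_univ_four, Function.update_apply]
      ring
    show deriv (fun t => cefalu lam (Function.update z 3 t)) (z 3) = _
    rw [he, (key _ _ _).deriv, Fin.sum_univ_four]
    ring

/-- At `λ = 1`, every point of `ℙ³` with exactly one coordinate zero and the
other three equal to `±1` is a singular point of `{p_1 = 0}`, and there are
exactly `16` such points in `ℙ³`. -/
theorem cefalu_singularities_one :
    (∀ z ∈ threeSignPoints,
        cefalu 1 z = 0 ∧ ∀ k, cefaluPartial 1 z k = 0) ∧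
      Set.ncard {x : Projectivization ℂ (Fin 4 → ℂ) |
        ∃ z : Fin 4 → ℂ, ∃ hz : z ≠ 0, z ∈ threeSignPoints ∧
          x = Projectivization.mk ℂ z hz} = 16 := by
  constructor
  · rintro z ⟨i, h0, h⟩
    have hsq : ∀ k, z k ^ 2 = if k = i then 0 else 1 := by
      intro k
      by_cases hk : k = i
      · rw [if_pos hk, hk, h0]; ring
      · rw [if_neg hk]; rcases h k hk with h' | h' <;> rw [h'] <;> ring
    have hsq4 : ∀ k, z k ^ 4 = if k = i then 0 else 1 := by
      intro k
      by_cases hk : k = i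
      · rw [if_pos hk, hk, h0]; ring
      · rw [if_neg hk]; rcases h k hk with h' | h' <;> rw [h'] <;> ring
    have hsum2 : (∑ k, z k ^ 2) = 3 := by
      simp only [Fin.sum_univ_four, hsq]
      fin_cases i <;>
        norm_num [Fin.ext_iff, show ((3:Fin 4):ℕ) = 3 from rfl,
          show ((2:Fin 4):ℕ) = 2 from rfl, show ((1:Fin 4):ℕ) = 1 from rfl,
          show ((0:Fin 4):ℕ) = 0 from rfl]
    have hsum4 : (∑ k, z k ^ 4) = 3 := by
      simp only [Fin.sum_univ_four, hsq4]
      fin_cases i <;>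
        norm_num [Fin.ext_iff, show ((3:Fin 4):ℕ) = 3 from rfl,
          show ((2:Fin 4):ℕ) = 2 from rfl, show ((1:Fin 4):ℕ) = 1 from rfl,
          show ((0:Fin 4):ℕ) = 0 from rfl]
    constructor
    · show (∑ k, z k ^ 4) - (1 / 3 : ℂ) * (∑ k, z k ^ 2) ^ 2 = 0
      rw [hsum2, hsum4]
      norm_num
    · intro k
      rw [cefaluPartial_eq, hsum2]
      by_cases hk : k = i
      · subst hk; rw [h0]; ring
      · rcases h k hk with h' | h' <;> rw [h'] <;> norm_num
  · have hset : {x : Projectivization ℂ (Fin 4 → ℂ) |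
        ∃ z : Fin 4 → ℂ, ∃ hz : z ≠ 0, z ∈ threeSignPoints ∧
          x = Projectivization.mk ℂ z hz} = Set.range repPoint := by
      ext x
      constructor
      · rintro ⟨z, hz, ⟨i, h0, h⟩, rfl⟩
        fin_cases i
        · have h1 := h 1 (by decide)
          have h2 := h 2 (by decide)
          have h3 := h 3 (by decide)
          have hu : z 1 ≠ 0 := by rcases h1 with h' | h' <;> rw [h'] <;> norm_num
          have h0' : z 0 = 0 := h0
          refine ⟨(0, decide (z 1 * z 2 = 1), decide (z 1 * z 3 = 1)), ?_⟩
          show Projectivization.mk ℂ (repv _ _ _) _ = _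
          rw [Projectivization.mk_eq_mk_iff]
          refine ⟨Units.mk0 (z 1) hu, ?_⟩
          funext m
          have hs2 := sgn_of_pm (pm_mul h1 h2)
          have hs3 := sgn_of_pm (pm_mul h1 h3)
          have h11 : z 1 * z 1 = 1 := pm_sq h1
          fin_cases m <;>
            simp [repv, Units.smul_def, h0', hs2, hs3, h11]
        · have h1 := h 0 (by decide)
          have h2 := h 2 (by decide)
          have h3 := h 3 (by decide)
          have hu : z 0 ≠ 0 := by rcases h1 with h' | h' <;> rw [h'] <;> norm_num
          have h0' : z 1 = 0 := h0
          refine ⟨(1, decide (z 0 * z 2 = 1), decide (z 0 * z 3 = 1)), ?_⟩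
          show Projectivization.mk ℂ (repv _ _ _) _ = _
          rw [Projectivization.mk_eq_mk_iff]
          refine ⟨Units.mk0 (z 0) hu, ?_⟩
          funext m
          have hs2 := sgn_of_pm (pm_mul h1 h2)
          have hs3 := sgn_of_pm (pm_mul h1 h3)
          have h11 : z 0 * z 0 = 1 := pm_sq h1
          fin_cases m <;>
            simp [repv, Units.smul_def, h0', hs2, hs3, h11]
        · have h1 := h 0 (by decide)
          have h2 := h 1 (by decide)
          have h3 := h 3 (by decide)
          have hu : z 0 ≠ 0 := by rcases h1 with h' | h' <;> rw [h'] <;> norm_num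
          have h0' : z 2 = 0 := h0
          refine ⟨(2, decide (z 0 * z 1 = 1), decide (z 0 * z 3 = 1)), ?_⟩
          show Projectivization.mk ℂ (repv _ _ _) _ = _
          rw [Projectivization.mk_eq_mk_iff]
          refine ⟨Units.mk0 (z 0) hu, ?_⟩
          funext m
          have hs2 := sgn_of_pm (pm_mul h1 h2)
          have hs3 := sgn_of_pm (pm_mul h1 h3)
          have h11 : z 0 * z 0 = 1 := pm_sq h1
          fin_cases m <;>
            simp [repv, Units.smul_def, h0', hs2, hs3, h11]
        · have h1 := h 0 (by decide)
          have h2 := h 1 (by decide)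
          have h3 := h 2 (by decide)
          have hu : z 0 ≠ 0 := by rcases h1 with h' | h' <;> rw [h'] <;> norm_num
          have h0' : z 3 = 0 := h0
          refine ⟨(3, decide (z 0 * z 1 = 1), decide (z 0 * z 2 = 1)), ?_⟩
          show Projectivization.mk ℂ (repv _ _ _) _ = _
          rw [Projectivization.mk_eq_mk_iff]
          refine ⟨Units.mk0 (z 0) hu, ?_⟩
          funext m
          have hs2 := sgn_of_pm (pm_mul h1 h2)
          have hs3 := sgn_of_pm (pm_mul h1 h3)
          have h11 : z 0 * z 0 = 1 := pm_sq h1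
          fin_cases m <;>
            simp [repv, Units.smul_def, h0', hs2, hs3, h11]
      · rintro ⟨⟨i, b, c⟩, rfl⟩
        exact ⟨repv i b c, repv_ne_zero i b c, repv_mem i b c, rfl⟩
    rw [hset, ← Set.image_univ, Set.ncard_image_of_injective _ repPoint_inj,
      Set.ncard_univ]
    simp [Nat.card_eq_fintype_card]
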